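/- For all positive integers a and δ, the identity s_δ(a) = ∑_{d | δ} J₂(d)·σ̄^d(a) holds, where s_δ(a) = ∑_{k² | a} gcd(k,δ)·gcd(a/k,δ)·ψ(a/k²), J₂ is the second Jordan totient function, and σ̄^d(a) = σ(a/d) if d | a and 0 otherwise. -/

import Mathlib

open Finset

/-- The Dedekind psi function: `ψ = Id * μ²`. -/
def dedekindPsi (n : ℕ) : ℕ := ∑ d ∈ n.divisors, if Squarefree d then n / d else 0

/-- `s_δ(a) = ∑_{k² ∣ a} gcd(k,δ)·gcd(a/k,δ)·ψ(a/k²)`. -/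
def sLocal (δ a : ℕ) : ℕ :=
  ∑ k ∈ a.divisors.filter (fun k => k ^ 2 ∣ a),
    Nat.gcd k δ * Nat.gcd (a / k) δ * dedekindPsi (a / k ^ 2)

/-- The second Jordan totient `J₂ = μ * Id²`. -/
def J2 (n : ℕ) : ℤ := ∑ d ∈ n.divisors, ArithmeticFunction.moebius d * ((n / d : ℕ) : ℤ) ^ 2

/-- `σ̄^d(a) = σ(a/d)` if `d ∣ a`, and `0` otherwise. -/
def sigmaBar (d a : ℕ) : ℤ := if d ∣ a then ∑ e ∈ (a / d).divisors, (e : ℤ) else 0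

namespace SJAux
def S (q : ℤ) (m : ℕ) : ℤ := ∑ t ∈ range (m+1), q^t
def Psi (q : ℤ) (m : ℕ) : ℤ := if m = 0 then 1 else q^m + q^(m-1)
def Jp (q : ℤ) (j : ℕ) : ℤ := if j = 0 then 1 else q^(2*j) - q^(2*j-2)
def L (q : ℤ) (α β : ℕ) : ℤ :=
  ∑ i ∈ range (α/2+1), q^(min i β) * q^(min (α-i) β) * Psi q (α-2*i)
def R (q : ℤ) (α β : ℕ) : ℤ := ∑ j ∈ range (min α β + 1), Jp q j * S q (α-j)
def D (q : ℤ) (α β i : ℕ) : ℤ :=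
  (q^(min i (β+1)) * q^(min (α-i) (β+1)) - q^(min i β) * q^(min (α-i) β)) * Psi q (α-2*i)

lemma Ssplit (q : ℤ) (m k : ℕ) : S q (m+k+1) = S q m + q^(m+1) * S q k := by
  unfold S
  rw [show m+k+1+1 = (m+1) + (k+1) by ring, Finset.sum_range_add, Finset.mul_sum]
  congr 1
  exact Finset.sum_congr rfl fun t _ => by rw [← pow_add]

lemma Tlem (q : ℤ) : ∀ α, ∑ i ∈ range (α/2+1), Psi q (α-2*i) = S q α := by
  intro α
  induction α using Nat.strong_induction_on with
  | _ α ih =>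
    match α with
    | 0 => simp [Psi, S]
    | 1 => simp [Psi, S, Finset.sum_range_succ]; ring
    | (n+2) =>
      have h2 : (n+2)/2 + 1 = (n/2 + 1) + 1 := by omega
      rw [h2, Finset.sum_range_succ']
      have e2 : ∑ i ∈ range (n/2+1), Psi q ((n+2) - 2*(i+1))
          = ∑ i ∈ range (n/2+1), Psi q (n - 2*i) :=
        Finset.sum_congr rfl fun i _ => by congr 1; omega
      rw [e2, ih n (by omega)]
      have hS : S q (n+2) = S q n + (q^(n+1) + q^(n+2)) := by
        unfold S
        rw [Finset.sum_range_succ, Finset.sum_range_succ]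
        ring
      rw [hS]
      have hne : (n+2) - 2*0 ≠ 0 := by omega
      rw [Psi, if_neg hne, show (n+2) - 2*0 = n+2 by omega, show (n+2) - 1 = n+1 by omega]
      ring

lemma sum_pow_rev (q : ℤ) (c n : ℕ) : ∑ i ∈ range (n+1), q^(c+n-i) = q^c * S q n := by
  have h := Finset.sum_range_reflect (fun j => q^(c+j)) (n+1)
  rw [S, Finset.mul_sum]
  calc ∑ i ∈ range (n+1), q^(c+n-i) = ∑ j ∈ range (n+1), q^(c+(n+1-1-j)) :=
        Finset.sum_congr rfl fun i hi => by
          congr 1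
          simp only [mem_range] at hi
          omega
    _ = ∑ j ∈ range (n+1), q^(c+j) := h
    _ = ∑ j ∈ range (n+1), q^c * q^j := Finset.sum_congr rfl fun j _ => by rw [pow_add]

lemma D_eq (q : ℤ) (α β : ℕ) (hβ : β < α) {i : ℕ} (hi : i ≤ β) (hi2 : i ≤ α - β - 1) :
    D q α β i = (q^2-1) * q^(2*β) * q^(α-β-1-i) := by
  unfold D
  rw [show min i (β+1) = i by omega, show min i β = i by omega,
      show min (α-i) (β+1) = β+1 by omega, show min (α-i) β = β by omega]
  have hne : α - 2*i ≠ 0 := by omega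
  rw [Psi, if_neg hne]
  have m1 : q^i * q^(α-2*i) = q^(α-i) := by rw [← pow_add]; congr 1; omega
  have m2 : q^i * q^(α-2*i-1) = q^(α-i-1) := by rw [← pow_add]; congr 1; omega
  calc (q^i * q^(β+1) - q^i * q^β) * (q^(α-2*i) + q^(α-2*i-1))
      = (q^(β+1) - q^β) * (q^i * q^(α-2*i) + q^i * q^(α-2*i-1)) := by ring
    _ = (q^(β+1) - q^β) * (q^(α-i) + q^(α-i-1)) := by rw [m1, m2]
    _ = (q^2-1) * q^(2*β) * q^(α-β-1-i) := by
        obtain ⟨u, hu1, hu2⟩ : ∃ u, α-i = (β+1)+u ∧ α-i-1 = β+u := ⟨α-β-1-i, by omega, by omega⟩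
        rw [hu2, hu1, show α-β-1-i = u by omega]
        ring

lemma DeltaL (q : ℤ) (α β : ℕ) (hβ : β < α) :
    L q α (β+1) = L q α β + (q^2-1) * q^(2*β) * S q (α-β-1) := by
  have hdiff : L q α (β+1) - L q α β = ∑ i ∈ range (α/2+1), D q α β i := by
    unfold L D
    rw [← Finset.sum_sub_distrib]
    exact Finset.sum_congr rfl fun i _ => by ring
  have key : ∑ i ∈ range (α/2+1), D q α β i = (q^2-1) * q^(2*β) * S q (α-β-1) := by
    rcases le_or_gt (α-β-1) β with hB | hA
    · -- Case B : γ ≤ β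
      have hsub : range (α-β-1+1) ⊆ range (α/2+1) := by
        intro x hx
        simp only [mem_range] at *
        omega
      rw [← Finset.sum_subset hsub (by
        intro i hi hni
        simp only [mem_range] at hi hni
        unfold D
        rw [show min i (β+1) = i by omega, show min i β = i by omega,
            show min (α-i) (β+1) = α-i by omega, show min (α-i) β = α-i by omega]
        ring)]
      calc ∑ i ∈ range (α-β-1+1), D q α β i
          = ∑ i ∈ range (α-β-1+1), (q^2-1) * q^(2*β) * q^(0+(α-β-1)-i) := by
            refine Finset.sum_congr rfl fun i hi => ?_
            simp only [mem_range] at hi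
            rw [D_eq q α β hβ (by omega) (by omega)]
            congr 2
            omega
        _ = (q^2-1) * q^(2*β) * ∑ i ∈ range (α-β-1+1), q^(0+(α-β-1)-i) := by
            rw [Finset.mul_sum]
        _ = (q^2-1) * q^(2*β) * S q (α-β-1) := by
            rw [sum_pow_rev q 0 (α-β-1), pow_zero, one_mul]
    · -- Case A : β < γ, set γ' = α-2β-2
      have hsplit : α/2+1 = (β+1) + ((α-2*β-2)/2+1) := by omega
      rw [hsplit, Finset.sum_range_add]
      have part1 : ∑ i ∈ range (β+1), D q α β i
          = (q^2-1) * q^(2*β) * (q^((α-2*β-2)+1) * S q β) := by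
        calc ∑ i ∈ range (β+1), D q α β i
            = ∑ i ∈ range (β+1), (q^2-1) * q^(2*β) * q^(((α-2*β-2)+1)+β-i) := by
              refine Finset.sum_congr rfl fun i hi => ?_
              simp only [mem_range] at hi
              rw [D_eq q α β hβ (by omega) (by omega)]
              congr 2
              omega
          _ = (q^2-1) * q^(2*β) * ∑ i ∈ range (β+1), q^(((α-2*β-2)+1)+β-i) := by
              rw [Finset.mul_sum]
          _ = _ := by rw [sum_pow_rev q ((α-2*β-2)+1) β]
      have part2 : ∑ j ∈ range ((α-2*β-2)/2+1), D q α β (β+1+j)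
          = (q^2-1) * q^(2*β) * S q (α-2*β-2) := by
        calc ∑ j ∈ range ((α-2*β-2)/2+1), D q α β (β+1+j)
            = ∑ j ∈ range ((α-2*β-2)/2+1), (q^(β+1) * q^(β+1) - q^β * q^β) *
                Psi q ((α-2*β-2) - 2*j) := by
              refine Finset.sum_congr rfl fun j hj => ?_
              simp only [mem_range] at hj
              unfold D
              rw [show min (β+1+j) (β+1) = β+1 by omega, show min (β+1+j) β = β by omega,
                  show min (α-(β+1+j)) (β+1) = β+1 by omega,
                  show min (α-(β+1+j)) β = β by omega,
                  show α - 2*(β+1+j) = (α-2*β-2) - 2*j by omega]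
          _ = (q^(β+1) * q^(β+1) - q^β * q^β) * ∑ j ∈ range ((α-2*β-2)/2+1),
                Psi q ((α-2*β-2) - 2*j) := by rw [Finset.mul_sum]
          _ = (q^(β+1) * q^(β+1) - q^β * q^β) * S q (α-2*β-2) := by rw [Tlem]
          _ = (q^2-1) * q^(2*β) * S q (α-2*β-2) := by ring
      rw [part1, part2, show α-β-1 = (α-2*β-2)+β+1 by omega, Ssplit]
      ring
  linarith [hdiff, key]

lemma Rstep (q : ℤ) (α β : ℕ) (hβ : β < α) :
    R q α (β+1) = R q α β + (q^2-1) * q^(2*β) * S q (α-β-1) := by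
  unfold R
  rw [show min α (β+1) = β+1 by omega, show min α β = β by omega, Finset.sum_range_succ]
  congr 1
  rw [Jp, if_neg (Nat.succ_ne_zero β), show 2*(β+1)-2 = 2*β by omega,
      show α-(β+1) = α-β-1 by omega]
  ring

lemma main (q : ℤ) : ∀ (β α : ℕ), β ≤ α → L q α β = R q α β := by
  intro β
  induction β with
  | zero =>
    intro α _
    unfold L R
    rw [show min α 0 = 0 from by omega, Finset.sum_range_one]
    simp only [Nat.min_zero, pow_zero, one_mul, Jp, if_pos rfl, Nat.sub_zero]
    rw [Tlem]
    simp
  | succ β ih =>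
    intro α hβα
    have hβ : β < α := by omega
    rw [DeltaL q α β hβ, ih α (by omega), Rstep q α β hβ]

end SJAux

namespace StAux

lemma div_ne_zero' {a b : ℕ} (h : b ∣ a) (ha : a ≠ 0) : a / b ≠ 0 :=
  fun h0 => ha (by rw [← Nat.div_mul_cancel h, h0, zero_mul])

lemma ne_zero_of_dvd {a b : ℕ} (h : a ∣ b) (hb : b ≠ 0) : a ≠ 0 := by
  rintro rfl; exact hb (Nat.eq_zero_of_zero_dvd h)

lemma sum_divisors_coprime {M : Type*} [AddCommMonoid M] (f : ℕ → M) {m n : ℕ}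
    (h : Nat.Coprime m n) (hm : m ≠ 0) (hn : n ≠ 0) :
    ∑ d ∈ (m * n).divisors, f d = ∑ i ∈ m.divisors, ∑ j ∈ n.divisors, f (i * j) := by
  rw [← Finset.sum_product']
  refine Finset.sum_nbij' (fun d => (Nat.gcd d m, Nat.gcd d n)) (fun p => p.1 * p.2)
    ?_ ?_ ?_ ?_ ?_
  · intro d _
    simp only [Nat.mem_divisors, Finset.mem_product]
    exact ⟨⟨Nat.gcd_dvd_right _ _, hm⟩, Nat.gcd_dvd_right _ _, hn⟩
  · rintro ⟨i, j⟩ hp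
    simp only [Nat.mem_divisors, Finset.mem_product] at hp ⊢
    exact ⟨mul_dvd_mul hp.1.1 hp.2.1, mul_ne_zero hm hn⟩
  · intro d hd
    simp only [Nat.mem_divisors] at hd
    exact (Nat.gcd_mul_gcd_eq_iff_dvd_mul_of_coprime h).2 hd.1
  · rintro ⟨i, j⟩ hp
    simp only [Nat.mem_divisors, Finset.mem_product] at hp
    obtain ⟨⟨hi, _⟩, hj, _⟩ := hp
    have h1 : Nat.gcd (i * j) m = i := by
      rw [mul_comm, Nat.Coprime.gcd_mul_left_cancel i (h.symm.coprime_dvd_left hj)]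
      exact Nat.gcd_eq_left hi
    have h2 : Nat.gcd (i * j) n = j := by
      rw [Nat.Coprime.gcd_mul_left_cancel j (h.coprime_dvd_left hi)]
      exact Nat.gcd_eq_left hj
    simp [h1, h2]
  · intro d hd
    simp only [Nat.mem_divisors] at hd
    rw [(Nat.gcd_mul_gcd_eq_iff_dvd_mul_of_coprime h).2 hd.1]

lemma gcd_mul_split {i j δ : ℕ} (hij : Nat.Coprime i j) :
    Nat.gcd (i * j) δ = Nat.gcd i δ * Nat.gcd j δ := by
  rw [Nat.gcd_comm, Nat.Coprime.gcd_mul δ hij, Nat.gcd_comm δ i, Nat.gcd_comm δ j]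

lemma psi_mul {m n : ℕ} (h : Nat.Coprime m n) (hm : m ≠ 0) (hn : n ≠ 0) :
    dedekindPsi (m * n) = dedekindPsi m * dedekindPsi n := by
  unfold dedekindPsi
  rw [sum_divisors_coprime _ h hm hn, Finset.sum_mul_sum]
  refine Finset.sum_congr rfl fun i hi => Finset.sum_congr rfl fun j hj => ?_
  simp only [Nat.mem_divisors] at hi hj
  have hij : Nat.Coprime i j := Nat.Coprime.coprime_dvd_left hi.1 (h.coprime_dvd_right hj.1)
  simp only [Nat.squarefree_mul hij]
  by_cases h1 : Squarefree i <;> by_cases h2 : Squarefree j <;>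
    simp [h1, h2, Nat.div_mul_div_comm hi.1 hj.1]

lemma sLocal_mul (δ : ℕ) {m n : ℕ} (h : Nat.Coprime m n) (hm : m ≠ 0) (hn : n ≠ 0) :
    sLocal δ (m * n) = sLocal δ m * sLocal δ n := by
  unfold sLocal
  rw [Finset.sum_filter, Finset.sum_filter, Finset.sum_filter,
      sum_divisors_coprime _ h hm hn, Finset.sum_mul_sum]
  refine Finset.sum_congr rfl fun i hi => Finset.sum_congr rfl fun j hj => ?_
  simp only [Nat.mem_divisors] at hi hj
  obtain ⟨hi1, -⟩ := hi
  obtain ⟨hj1, -⟩ := hj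
  have hij : Nat.Coprime i j := Nat.Coprime.coprime_dvd_left hi1 (h.coprime_dvd_right hj1)
  have hkey : (i * j) ^ 2 ∣ m * n ↔ i ^ 2 ∣ m ∧ j ^ 2 ∣ n := by
    constructor
    · intro hd
      constructor
      · refine Nat.Coprime.dvd_of_dvd_mul_right
          (Nat.Coprime.pow_left 2 (Nat.Coprime.coprime_dvd_left hi1 h)) ?_
        exact dvd_trans (pow_dvd_pow_of_dvd (dvd_mul_right i j) 2) hd
      · refine Nat.Coprime.dvd_of_dvd_mul_left
          (Nat.Coprime.pow_left 2 (Nat.Coprime.coprime_dvd_left hj1 h.symm)) ?_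
        exact dvd_trans (pow_dvd_pow_of_dvd (dvd_mul_left j i) 2) hd
    · rintro ⟨h1, h2⟩
      rw [mul_pow]
      exact mul_dvd_mul h1 h2
  by_cases h1 : i ^ 2 ∣ m
  · by_cases h2 : j ^ 2 ∣ n
    · rw [if_pos (hkey.2 ⟨h1, h2⟩), if_pos h1, if_pos h2]
      have hq1 : m * n / (i * j) = (m / i) * (n / j) := (Nat.div_mul_div_comm hi1 hj1).symm
      have hq2 : m * n / (i * j) ^ 2 = (m / i ^ 2) * (n / j ^ 2) := by
        rw [mul_pow]
        exact (Nat.div_mul_div_comm h1 h2).symm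
      have hcop2 : Nat.Coprime (m / i) (n / j) :=
        Nat.Coprime.coprime_dvd_left (Nat.div_dvd_of_dvd hi1)
          (h.coprime_dvd_right (Nat.div_dvd_of_dvd hj1))
      have hcop3 : Nat.Coprime (m / i ^ 2) (n / j ^ 2) :=
        Nat.Coprime.coprime_dvd_left (Nat.div_dvd_of_dvd h1)
          (h.coprime_dvd_right (Nat.div_dvd_of_dvd h2))
      rw [hq1, hq2, gcd_mul_split hij, gcd_mul_split hcop2,
          psi_mul hcop3 (div_ne_zero' h1 hm) (div_ne_zero' h2 hn)]
      ring
    · rw [if_neg h2, if_neg (fun hc => h2 (hkey.1 hc).2), mul_zero]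
  · rw [if_neg h1, if_neg (fun hc => h1 (hkey.1 hc).1), zero_mul]

lemma J2_mul {m n : ℕ} (h : Nat.Coprime m n) (hm : m ≠ 0) (hn : n ≠ 0) :
    J2 (m * n) = J2 m * J2 n := by
  unfold J2
  rw [sum_divisors_coprime _ h hm hn, Finset.sum_mul_sum]
  refine Finset.sum_congr rfl fun i hi => Finset.sum_congr rfl fun j hj => ?_
  simp only [Nat.mem_divisors] at hi hj
  have hij : Nat.Coprime i j := Nat.Coprime.coprime_dvd_left hi.1 (h.coprime_dvd_right hj.1)
  rw [ArithmeticFunction.isMultiplicative_moebius.map_mul_of_coprime hij,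
      show m * n / (i * j) = (m / i) * (n / j) from (Nat.div_mul_div_comm hi.1 hj.1).symm]
  push_cast
  ring

lemma sigInt_mul {m n : ℕ} (h : Nat.Coprime m n) (hm : m ≠ 0) (hn : n ≠ 0) :
    (∑ e ∈ (m * n).divisors, (e : ℤ))
      = (∑ e ∈ m.divisors, (e : ℤ)) * (∑ e ∈ n.divisors, (e : ℤ)) := by
  rw [sum_divisors_coprime _ h hm hn, Finset.sum_mul_sum]
  exact Finset.sum_congr rfl fun i _ => Finset.sum_congr rfl fun j _ => by push_cast; ring

lemma RHS_swap {δ a : ℕ} (hδ : δ ≠ 0) (ha : a ≠ 0) :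
    ∑ d ∈ δ.divisors, J2 d * sigmaBar d a
      = ∑ d ∈ a.divisors, (if d ∣ δ then J2 d else 0) * (∑ e ∈ (a / d).divisors, (e : ℤ)) := by
  calc ∑ d ∈ δ.divisors, J2 d * sigmaBar d a
      = ∑ d ∈ δ.divisors, if d ∣ a then J2 d * (∑ e ∈ (a / d).divisors, (e : ℤ)) else 0 := by
        refine Finset.sum_congr rfl fun d _ => ?_
        unfold sigmaBar
        by_cases hd : d ∣ a <;> simp [hd]
    _ = ∑ d ∈ δ.divisors.filter (· ∣ a), J2 d * (∑ e ∈ (a / d).divisors, (e : ℤ)) :=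
        (Finset.sum_filter _ _).symm
    _ = ∑ d ∈ a.divisors.filter (· ∣ δ), J2 d * (∑ e ∈ (a / d).divisors, (e : ℤ)) := by
        congr 1
        ext x
        simp only [Finset.mem_filter, Nat.mem_divisors, hδ, ha, and_true, ne_eq,
          not_false_eq_true]
        tauto
    _ = ∑ d ∈ a.divisors, if d ∣ δ then J2 d * (∑ e ∈ (a / d).divisors, (e : ℤ)) else 0 :=
        Finset.sum_filter _ _
    _ = _ := by
        refine Finset.sum_congr rfl fun d _ => ?_
        by_cases hd : d ∣ δ <;> simp [hd]

lemma RHSa_mul (δ : ℕ) {m n : ℕ} (h : Nat.Coprime m n) (hm : m ≠ 0) (hn : n ≠ 0) :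
    ∑ d ∈ (m * n).divisors, (if d ∣ δ then J2 d else 0) * (∑ e ∈ (m * n / d).divisors, (e : ℤ))
      = (∑ d ∈ m.divisors, (if d ∣ δ then J2 d else 0) * (∑ e ∈ (m / d).divisors, (e : ℤ)))
        * (∑ d ∈ n.divisors, (if d ∣ δ then J2 d else 0) * (∑ e ∈ (n / d).divisors, (e : ℤ))) := by
  rw [sum_divisors_coprime _ h hm hn, Finset.sum_mul_sum]
  refine Finset.sum_congr rfl fun i hi => Finset.sum_congr rfl fun j hj => ?_
  simp only [Nat.mem_divisors] at hi hj
  obtain ⟨hi1, -⟩ := hi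
  obtain ⟨hj1, -⟩ := hj
  have hij : Nat.Coprime i j := Nat.Coprime.coprime_dvd_left hi1 (h.coprime_dvd_right hj1)
  have hkey : i * j ∣ δ ↔ i ∣ δ ∧ j ∣ δ :=
    ⟨fun hc => ⟨dvd_trans (dvd_mul_right i j) hc, dvd_trans (dvd_mul_left j i) hc⟩,
     fun ⟨h1, h2⟩ => hij.mul_dvd_of_dvd_of_dvd h1 h2⟩
  by_cases h1 : i ∣ δ
  · by_cases h2 : j ∣ δ
    · rw [if_pos (hkey.2 ⟨h1, h2⟩), if_pos h1, if_pos h2]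
      have hq1 : m * n / (i * j) = (m / i) * (n / j) := (Nat.div_mul_div_comm hi1 hj1).symm
      have hcop2 : Nat.Coprime (m / i) (n / j) :=
        Nat.Coprime.coprime_dvd_left (Nat.div_dvd_of_dvd hi1)
          (h.coprime_dvd_right (Nat.div_dvd_of_dvd hj1))
      rw [hq1, J2_mul hij (ne_zero_of_dvd hi1 hm) (ne_zero_of_dvd hj1 hn),
          sigInt_mul hcop2 (div_ne_zero' hi1 hm) (div_ne_zero' hj1 hn)]
      ring
    · rw [if_neg h2, if_neg (fun hc => h2 (hkey.1 hc).2)]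
      ring
  · rw [if_neg h1, if_neg (fun hc => h1 (hkey.1 hc).1)]
    ring

lemma psi_one : dedekindPsi 1 = 1 := by
  simp [dedekindPsi, Nat.divisors_one]

lemma not_squarefree_pp {p : ℕ} (hp : p.Prime) (k : ℕ) : ¬ Squarefree (p^(k+2)) := by
  intro hs
  have hd : p * p ∣ p^(k+2) := by
    rw [show p*p = p^2 by ring]
    exact pow_dvd_pow p (by omega)
  exact hp.one_lt.ne' (Nat.isUnit_iff.1 (hs p hd))

lemma psi_pp {p : ℕ} (hp : p.Prime) (m : ℕ) : dedekindPsi (p^(m+1)) = p^(m+1) + p^m := by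
  unfold dedekindPsi
  rw [Nat.sum_divisors_prime_pow hp, Finset.sum_range_succ', Finset.sum_range_succ']
  have h2 : ∀ x : ℕ, (if Squarefree (p^(x+1+1)) then p^(m+1) / p^(x+1+1) else 0) = 0 :=
    fun x => if_neg (not_squarefree_pp hp x)
  simp only [h2, Finset.sum_const_zero, zero_add, pow_zero, pow_one]
  rw [if_pos hp.squarefree, if_pos squarefree_one, Nat.div_one,
      show p^(m+1)/p = p^m from by rw [pow_succ, Nat.mul_div_cancel _ hp.pos]]
  omega

lemma psi_pp_cast {p : ℕ} (hp : p.Prime) (m : ℕ) :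
    ((dedekindPsi (p^m) : ℕ) : ℤ) = SJAux.Psi (p:ℤ) m := by
  cases m with
  | zero => simp [psi_one, SJAux.Psi]
  | succ k =>
    rw [psi_pp hp k]
    simp only [SJAux.Psi, Nat.succ_ne_zero, if_false, Nat.add_sub_cancel]
    push_cast
    ring

lemma J2_one : J2 1 = 1 := by
  simp [J2, Nat.divisors_one]

lemma J2_pp {p : ℕ} (hp : p.Prime) (j : ℕ) : J2 (p^j) = SJAux.Jp (p:ℤ) j := by
  cases j with
  | zero => simpa [SJAux.Jp] using J2_one
  | succ k =>
    unfold J2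
    rw [Nat.sum_divisors_prime_pow hp, Finset.sum_range_succ', Finset.sum_range_succ']
    have h2 : ∀ x : ℕ,
        ArithmeticFunction.moebius (p^(x+1+1)) * ((p^(k+1) / p^(x+1+1) : ℕ) : ℤ)^2 = 0 :=
      fun x => by
        rw [ArithmeticFunction.moebius_eq_zero_of_not_squarefree (not_squarefree_pp hp x),
          zero_mul]
    simp only [h2, Finset.sum_const_zero, zero_add, pow_zero, pow_one]
    rw [ArithmeticFunction.moebius_apply_one, ArithmeticFunction.moebius_apply_prime hp,
        Nat.div_one, show p^(k+1)/p = p^k from by rw [pow_succ, Nat.mul_div_cancel _ hp.pos]]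
    rw [SJAux.Jp, if_neg (Nat.succ_ne_zero k), show 2*(k+1)-2 = 2*k by omega]
    push_cast
    ring

lemma sig_pp {p : ℕ} (hp : p.Prime) (m : ℕ) :
    (∑ e ∈ (p^m).divisors, (e : ℤ)) = SJAux.S (p:ℤ) m := by
  rw [Nat.sum_divisors_prime_pow hp]
  unfold SJAux.S
  exact Finset.sum_congr rfl fun i _ => by push_cast; ring

lemma gcd_pp {p δ : ℕ} (hp : p.Prime) (hδ : δ ≠ 0) (i : ℕ) :
    Nat.gcd (p^i) δ = p^(min i (δ.factorization p)) := by
  obtain ⟨j, hj, he⟩ := (Nat.dvd_prime_pow hp).1 (Nat.gcd_dvd_left (p^i) δ)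
  have hfact := Nat.factorization_gcd (pow_ne_zero i hp.pos.ne') hδ
  have hval : (Nat.gcd (p^i) δ).factorization p = min i (δ.factorization p) := by
    rw [hfact]
    simp [Nat.Prime.factorization_pow hp, Finsupp.inf_apply]
  rw [he] at hval ⊢
  rw [Nat.Prime.factorization_pow hp] at hval
  simp only [Finsupp.single_eq_same] at hval
  rw [hval]


lemma pp_case {p δ : ℕ} (hp : p.Prime) (hδ : δ ≠ 0) (α : ℕ) :
    ((sLocal δ (p^α) : ℕ) : ℤ) = ∑ d ∈ δ.divisors, J2 d * sigmaBar d (p^α) := by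
  have hpα : (p:ℕ)^α ≠ 0 := pow_ne_zero α hp.pos.ne'
  have hL : sLocal δ (p^α)
      = ∑ i ∈ range (α/2+1), p^(min i (min α (δ.factorization p)))
          * p^(min (α-i) (min α (δ.factorization p))) * dedekindPsi (p^(α-2*i)) := by
    unfold sLocal
    rw [Finset.sum_filter, Nat.sum_divisors_prime_pow hp]
    have step1 : ∀ x ∈ range (α+1),
        (if (p^x)^2 ∣ p^α then
            Nat.gcd (p^x) δ * Nat.gcd (p^α / p^x) δ * dedekindPsi (p^α / (p^x)^2) else 0)
        = (if x*2 ≤ α then p^(min x (min α (δ.factorization p)))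
            * p^(min (α-x) (min α (δ.factorization p))) * dedekindPsi (p^(α-2*x)) else 0) := by
      intro x hx
      simp only [Finset.mem_range] at hx
      have hdvd_iff : (p^x)^2 ∣ p^α ↔ x*2 ≤ α := by
        rw [← pow_mul]
        exact Nat.pow_dvd_pow_iff_le_right hp.one_lt
      by_cases hcond : x*2 ≤ α
      · rw [if_pos (hdvd_iff.2 hcond), if_pos hcond, ← pow_mul,
            Nat.pow_div (show x ≤ α by omega) hp.pos,
            Nat.pow_div (show x*2 ≤ α by omega) hp.pos,
            gcd_pp hp hδ, gcd_pp hp hδ,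
            show min x (δ.factorization p) = min x (min α (δ.factorization p)) by omega,
            show min (α-x) (δ.factorization p)
              = min (α-x) (min α (δ.factorization p)) by omega,
            show α - x*2 = α - 2*x by omega]
      · rw [if_neg (fun hd => hcond (hdvd_iff.1 hd)), if_neg hcond]
    rw [Finset.sum_congr rfl step1, ← Finset.sum_filter,
        show (range (α+1)).filter (fun x => x*2 ≤ α) = range (α/2+1) from by
          ext x; simp only [Finset.mem_filter, Finset.mem_range]; omega]
  have hcast : ((sLocal δ (p^α) : ℕ) : ℤ) = SJAux.L (p:ℤ) α (min α (δ.factorization p)) := by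
    rw [hL]
    unfold SJAux.L
    push_cast
    exact Finset.sum_congr rfl fun i _ => by rw [psi_pp_cast hp]
  have hR : ∑ d ∈ δ.divisors, J2 d * sigmaBar d (p^α)
      = SJAux.R (p:ℤ) α (min α (δ.factorization p)) := by
    rw [RHS_swap hδ hpα, Nat.sum_divisors_prime_pow hp]
    have step : ∀ x ∈ range (α+1),
        (if p^x ∣ δ then J2 (p^x) else 0) * (∑ e ∈ (p^α / p^x).divisors, (e:ℤ))
        = (if x ≤ δ.factorization p then
            SJAux.Jp (p:ℤ) x * SJAux.S (p:ℤ) (α-x) else 0) := by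
      intro x hx
      simp only [Finset.mem_range] at hx
      by_cases hcond : x ≤ δ.factorization p
      · rw [if_pos ((hp.pow_dvd_iff_le_factorization hδ).2 hcond), if_pos hcond,
            Nat.pow_div (show x ≤ α by omega) hp.pos, J2_pp hp, sig_pp hp]
      · rw [if_neg (fun hd => hcond ((hp.pow_dvd_iff_le_factorization hδ).1 hd)),
            if_neg hcond, zero_mul]
    rw [Finset.sum_congr rfl step, ← Finset.sum_filter,
        show (range (α+1)).filter (fun x => x ≤ δ.factorization p)
          = range (min α (δ.factorization p) + 1) from by
          ext x; simp only [Finset.mem_filter, Finset.mem_range]; omega]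
    unfold SJAux.R
    rw [show min α (min α (δ.factorization p)) = min α (δ.factorization p) by omega]
  rw [hcast, hR]
  exact SJAux.main (p:ℤ) (min α (δ.factorization p)) α (min_le_left α (δ.factorization p))

end StAux

/-- `s_δ(a) = ∑_{d ∣ δ} J₂(d)·σ̄^d(a)`. -/
theorem sLocal_eq_sum_J2_sigmaBar (a δ : ℕ) (ha : 0 < a) (hδ : 0 < δ) :
    (sLocal δ a : ℤ) = ∑ d ∈ δ.divisors, J2 d * sigmaBar d a := by
  revert ha
  induction a using Nat.recOnPrimePow with
  | zero => intro h; exact absurd h (lt_irrefl 0)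
  | one =>
    intro _
    have hs : sLocal δ 1 = 1 := by
      unfold sLocal
      rw [Nat.divisors_one, Finset.filter_singleton, if_pos (by norm_num : (1:ℕ)^2 ∣ 1)]
      simp [StAux.psi_one]
    rw [hs, StAux.RHS_swap hδ.ne' one_ne_zero]
    simp [Nat.divisors_one, StAux.J2_one]
  | prime_pow_mul a p n hp hpa hn IH =>
    intro _
    have ha' : a ≠ 0 := by rintro rfl; exact hpa (dvd_zero p)
    have hcop : Nat.Coprime (p^n) a :=
      Nat.Coprime.pow_left n ((Nat.Prime.coprime_iff_not_dvd hp).2 hpa)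
    have hpn : (p:ℕ)^n ≠ 0 := pow_ne_zero n hp.pos.ne'
    calc ((sLocal δ (p^n * a) : ℕ) : ℤ)
        = ((sLocal δ (p^n) : ℕ) : ℤ) * ((sLocal δ a : ℕ) : ℤ) := by
          rw [StAux.sLocal_mul δ hcop hpn ha']
          push_cast
          ring
      _ = (∑ d ∈ δ.divisors, J2 d * sigmaBar d (p^n))
            * (∑ d ∈ δ.divisors, J2 d * sigmaBar d a) := by
          rw [StAux.pp_case hp hδ.ne' n, IH (Nat.pos_of_ne_zero ha')]
      _ = ∑ d ∈ δ.divisors, J2 d * sigmaBar d (p^n * a) := by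
          rw [StAux.RHS_swap hδ.ne' hpn, StAux.RHS_swap hδ.ne' ha',
              StAux.RHS_swap hδ.ne' (mul_ne_zero hpn ha'),
              StAux.RHSa_mul δ hcop hpn ha']
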